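/- Let A be a commutative ring, g a Lie algebra over A that is finitely generated projective as an A-module with perfect Killing form, and let m be a g-module on which the Casimir element Ω of the adjoint representation acts as the identity. Then the Lie algebra cohomology groups H^i(g, m) vanish for all i ≥ 0. -/

import Mathlib

open CategoryTheory TensorProduct

attribute [local instance 100] LieRing.ofAssociativeRing

variable (A : Type) [CommRing A]
variable (g : Type) [LieRing g] [LieAlgebra A g]

/-- The augmentation homomorphism `U(g) → A`, the lift of the zero Lie algebra map `g → A`. -/
noncomputable def augmentation : UniversalEnvelopingAlgebra A g →ₐ[A] A :=
  UniversalEnvelopingAlgebra.lift A (0 : g →ₗ⁅A⁆ A)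

/-- `A` as the trivial module over the universal enveloping algebra `U(g)`,
via the augmentation. -/
noncomputable instance trivialUEAModule : Module (UniversalEnvelopingAlgebra A g) A :=
  Module.compHom A (augmentation A g).toRingHom

namespace Stmt19Aux

section Tensor

variable {A : Type} [CommRing A]

theorem lift_map {M N P Q S : Type} [AddCommGroup M] [AddCommGroup N] [AddCommGroup P]
    [AddCommGroup Q] [AddCommGroup S] [Module A M] [Module A N] [Module A P] [Module A Q]
    [Module A S]
    (C : M →ₗ[A] N →ₗ[A] S) (u : P →ₗ[A] M) (v : Q →ₗ[A] N) (w : P ⊗[A] Q) :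
    TensorProduct.lift C (TensorProduct.map u v w) =
      TensorProduct.lift (C.compl₁₂ u v) w := by
  induction w using TensorProduct.induction_on with
  | zero => simp
  | tmul x y => simp
  | add x y hx hy => simp [hx, hy]

theorem compl₁₂_compl₁₂ {M N P Q M' N' S : Type} [AddCommGroup M] [AddCommGroup N]
    [AddCommGroup P] [AddCommGroup Q] [AddCommGroup M'] [AddCommGroup N'] [AddCommGroup S]
    [Module A M] [Module A N] [Module A P] [Module A Q] [Module A M'] [Module A N']
    [Module A S]
    (C : M →ₗ[A] N →ₗ[A] S) (f : M' →ₗ[A] M) (h : N' →ₗ[A] N)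
    (f' : P →ₗ[A] M') (h' : Q →ₗ[A] N') :
    (C.compl₁₂ f h).compl₁₂ f' h' = C.compl₁₂ (f.comp f') (h.comp h') := by
  apply LinearMap.ext; intro x; apply LinearMap.ext; intro y
  simp [LinearMap.compl₁₂_apply]

/-- An element of `M ⊗ M`, for `M` finite projective, vanishes provided all pairs of linear
functionals kill it. -/
theorem tensor_eq_zero {M : Type} [AddCommGroup M] [Module A M]
    [Module.Finite A M] [Module.Projective A M] (w : M ⊗[A] M)
    (hw : ∀ f f' : Module.Dual A M,
      TensorProduct.lift ((LinearMap.mul A A).compl₁₂ f f') w = 0) : w = 0 := by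
  obtain ⟨n, p, hp⟩ := Module.Finite.exists_fin' A M
  obtain ⟨s, hs⟩ := Module.projective_lifting_property p LinearMap.id hp
  set b := Pi.basisFun A (Fin n) with hb
  have key : ∀ (i j : Fin n) (v : (Fin n → A) ⊗[A] (Fin n → A)),
      (b.tensorProduct b).repr v (i, j)
        = TensorProduct.lift ((LinearMap.mul A A).compl₁₂ (b.coord i) (b.coord j)) v := by
    intro i j v
    induction v using TensorProduct.induction_on with
    | zero => simp
    | tmul x y =>
        simp [Module.Basis.tensorProduct_repr_tmul_apply, Module.Basis.coord_apply]
        ring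
    | add x y hx hy => simp [hx, hy]
  have hw' : TensorProduct.map s s w = 0 := by
    rw [← LinearEquiv.map_eq_zero_iff (b.tensorProduct b).repr]
    apply Finsupp.ext
    rintro ⟨i, j⟩
    rw [key i j, lift_map, compl₁₂_compl₁₂]
    simpa using hw ((b.coord i).comp s) ((b.coord j).comp s)
  have : TensorProduct.map p p (TensorProduct.map s s w) = w := by
    rw [← LinearMap.comp_apply, ← TensorProduct.map_comp, hs, TensorProduct.map_id,
      LinearMap.id_apply]
  rw [← this, hw', map_zero]

end Tensor

section Casimir

variable {A : Type} [CommRing A] {g : Type} [LieRing g] [LieAlgebra A g]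

local notation "R" => UniversalEnvelopingAlgebra A g

/-- The linear map `g ⊗ g → U(g)` given by multiplying the images of the two factors. -/
noncomputable def mulι : g ⊗[A] g →ₗ[A] R :=
  TensorProduct.lift
    (((LinearMap.mul A R).comp
        (UniversalEnvelopingAlgebra.ι A : g →ₗ⁅A⁆ R).toLinearMap).compl₂
      (UniversalEnvelopingAlgebra.ι A : g →ₗ⁅A⁆ R).toLinearMap)

@[simp] theorem mulι_tmul (a c : g) :
    mulι (A := A) (g := g) (a ⊗ₜ[A] c) =
      UniversalEnvelopingAlgebra.ι A a * UniversalEnvelopingAlgebra.ι A c := rfl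

variable [Module.Finite A g] [Module.Projective A g]
variable (hperf : Function.Bijective (killingForm A g))
    (t : g ⊗[A] g)
    (ht : TensorProduct.dualDistrib A g g
        ((TensorProduct.map (killingForm A g) (killingForm A g)) t) =
      TensorProduct.lift (killingForm A g))

include hperf ht in
theorem invariant (x : g) :
    TensorProduct.map (LieAlgebra.ad A g x) LinearMap.id t
      + TensorProduct.map LinearMap.id (LieAlgebra.ad A g x) t = 0 := by
  set B := killingForm A g with hB
  have hsymm : ∀ u v : g, B u v = B v u := fun u v => LieModule.traceForm_comm A g g u v
  have hinv : ∀ u v w : g, B ⁅u, v⁆ w = B u ⁅v, w⁆ := fun u v w =>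
    LieModule.traceForm_apply_lie_apply A g g u v w
  have hpair : ∀ u w : g,
      TensorProduct.lift ((LinearMap.mul A A).compl₁₂ (B u) (B w)) t = B u w := by
    intro u w
    have h1 := LinearMap.congr_fun ht (u ⊗ₜ[A] w)
    have h2 : ∀ t' : g ⊗[A] g,
        TensorProduct.dualDistrib A g g (TensorProduct.map B B t') (u ⊗ₜ[A] w)
          = TensorProduct.lift ((LinearMap.mul A A).compl₁₂ (B u) (B w)) t' := by
      intro t'
      induction t' using TensorProduct.induction_on with
      | zero => simp
      | tmul a c =>
          simp only [TensorProduct.map_tmul, TensorProduct.dualDistrib_apply,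
            TensorProduct.lift.tmul, LinearMap.compl₁₂_apply, LinearMap.mul_apply']
          rw [hsymm a u, hsymm c w]
      | add a c ha hc => simp [ha, hc]
    rw [← h2 t, h1]
    simp
  apply tensor_eq_zero
  intro f f'
  obtain ⟨y, rfl⟩ := hperf.2 f
  obtain ⟨z, rfl⟩ := hperf.2 f'
  have e1 : (B y).comp (LieAlgebra.ad A g x) = B ⁅y, x⁆ := by
    apply LinearMap.ext; intro w
    simp only [LinearMap.comp_apply, LieAlgebra.ad_apply]
    exact (hinv y x w).symm
  have e2 : (B z).comp (LieAlgebra.ad A g x) = B ⁅z, x⁆ := by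
    apply LinearMap.ext; intro w
    simp only [LinearMap.comp_apply, LieAlgebra.ad_apply]
    exact (hinv z x w).symm
  rw [map_add, lift_map, lift_map, compl₁₂_compl₁₂, compl₁₂_compl₁₂, LinearMap.comp_id,
    LinearMap.comp_id, e1, e2, hpair, hpair, hinv y x z]
  have : ⁅x, z⁆ = -⁅z, x⁆ := (lie_skew x z).symm
  rw [this, map_neg, neg_add_cancel]

include hperf ht in
theorem central : ∀ u : R, u * mulι (A := A) (g := g) t = mulι (A := A) (g := g) t * u := by
  set Ω := mulι (A := A) (g := g) t with hΩdef
  set ι' := UniversalEnvelopingAlgebra.ι A (L := g) with hι'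
  have hmap : ∀ x : g,
      (LinearMap.mulLeft A (ι' x)).comp (mulι (A := A) (g := g))
        - (LinearMap.mulRight A (ι' x)).comp (mulι (A := A) (g := g))
      = (mulι (A := A) (g := g)).comp
          (TensorProduct.map (LieAlgebra.ad A g x) LinearMap.id
            + TensorProduct.map LinearMap.id (LieAlgebra.ad A g x)) := by
    intro x
    apply TensorProduct.ext'
    intro a c
    simp only [LinearMap.sub_apply, LinearMap.comp_apply, LinearMap.mulLeft_apply,
      LinearMap.mulRight_apply, LinearMap.add_apply, TensorProduct.map_tmul,
      LinearMap.id_apply, map_add, mulι_tmul, LieAlgebra.ad_apply]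
    have h1 : ι' ⁅x, a⁆ = ι' x * ι' a - ι' a * ι' x := by
      rw [LieHom.map_lie, Ring.lie_def]
    have h2 : ι' ⁅x, c⁆ = ι' x * ι' c - ι' c * ι' x := by
      rw [LieHom.map_lie, Ring.lie_def]
    rw [h1, h2]
    noncomm_ring
  have hι : ∀ x : g, ι' x * Ω = Ω * ι' x := by
    intro x
    have h := LinearMap.congr_fun (hmap x) t
    simp only [LinearMap.sub_apply, LinearMap.comp_apply, LinearMap.add_apply,
      LinearMap.mulLeft_apply, LinearMap.mulRight_apply] at h
    rw [invariant hperf t ht x, map_zero] at h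
    exact sub_eq_zero.mp h
  intro u
  have hsurj : Function.Surjective (UniversalEnvelopingAlgebra.mkAlgHom A g) :=
    by unfold UniversalEnvelopingAlgebra.mkAlgHom; exact RingCon.mkₐ_surjective _
  obtain ⟨v, rfl⟩ := hsurj u
  induction v using TensorAlgebra.induction with
  | algebraMap r => rw [AlgHom.commutes]; exact Algebra.commutes r Ω
  | ι x =>
      have : UniversalEnvelopingAlgebra.mkAlgHom A g (TensorAlgebra.ι A x) = ι' x := by
        rw [hι']; rfl
      rw [this]
      exact hι x
  | mul a c ha hc => rw [map_mul, mul_assoc, hc, ← mul_assoc, ha, mul_assoc]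
  | add a c ha hc => rw [map_add, add_mul, mul_add, ha, hc]

theorem aug_mulι (w : g ⊗[A] g) : augmentation A g (mulι (A := A) (g := g) w) = 0 := by
  induction w using TensorProduct.induction_on with
  | zero => simp
  | tmul a c =>
      rw [mulι_tmul, map_mul]
      have : ∀ y : g, augmentation A g (UniversalEnvelopingAlgebra.ι A y) = 0 := by
        intro y
        rw [augmentation, UniversalEnvelopingAlgebra.lift_ι_apply]
        rfl
      rw [this a, zero_mul]
  | add a c ha hc => simp [map_add, ha, hc]

end Casimir

section Homological

variable {R : Type} [Ring R] (Ω : R) (hc : ∀ u : R, u * Ω = Ω * u)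

/-- Multiplication by a central element, as an endomorphism of any module. -/
noncomputable def casimirHom (N : ModuleCat R) : N ⟶ N := ModuleCat.ofHom
  { toFun v := Ω • v
    map_add' a b := smul_add Ω a b
    map_smul' r v := by
      simp only [RingHom.id_apply, ← mul_smul, hc r] }

theorem casimirHom_naturality {N N' : ModuleCat R} (q : N ⟶ N') :
    casimirHom Ω hc N ≫ q = q ≫ casimirHom Ω hc N' := by
  apply ModuleCat.hom_ext; apply LinearMap.ext; intro v
  simp [casimirHom, map_smul]

/-- Multiplication by a central element, as an endomorphism of any complex of modules. -/
@[simps] noncomputable def casimirChain {ι : Type} {c : ComplexShape ι}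
    (K : HomologicalComplex (ModuleCat R) c) : K ⟶ K where
  f i := casimirHom Ω hc (K.X i)
  comm' i j _ := casimirHom_naturality Ω hc (K.d i j)

end Homological

end Stmt19Aux

open Stmt19Aux in
/-- Let `A` be a commutative ring, `g` a Lie algebra over `A` that is finitely
generated projective as an `A`-module with perfect Killing form, and let `m` be a `g`-module
(equivalently a `U(g)`-module) on which the Casimir element `Ω` of the adjoint representation
acts as the identity.  Here `Ω ∈ U(g)` is the image of the element `t ∈ g ⊗ g` corresponding to
the Killing form under `φ⁻¹ ⊗ φ⁻¹` (where `φ : g ≅ g*` is induced by the perfect Killing form),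
i.e. `t` satisfies `(φ ⊗ φ)(t) = K_g ∈ (g ⊗ g)*`, and `Ω` is obtained from `t` by multiplying
the two tensor factors inside `U(g)`.  Then the Lie algebra cohomology groups
`H^i(g, m) = Ext^i_{U(g)}(A, m)` vanish for all `i ≥ 0`. -/
theorem stmt_19 [Module.Finite A g] [Module.Projective A g]
    (hperf : Function.Bijective (killingForm A g))
    (t : g ⊗[A] g)
    (ht : TensorProduct.dualDistrib A g g
        ((TensorProduct.map (killingForm A g) (killingForm A g)) t) =
      TensorProduct.lift (killingForm A g))
    (m : Type) [AddCommGroup m] [Module (UniversalEnvelopingAlgebra A g) m]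
    (hΩ : ∀ v : m,
      (TensorProduct.lift
        (((LinearMap.mul A (UniversalEnvelopingAlgebra A g)).comp
            (UniversalEnvelopingAlgebra.ι A : g →ₗ⁅A⁆ _).toLinearMap).compl₂
          (UniversalEnvelopingAlgebra.ι A : g →ₗ⁅A⁆ _).toLinearMap) t) • v = v) :
    ∀ i : ℕ, Subsingleton
      (((Ext ℤ (ModuleCat (UniversalEnvelopingAlgebra A g)) i).obj
          (Opposite.op (ModuleCat.of (UniversalEnvelopingAlgebra A g) A))).obj
        (ModuleCat.of (UniversalEnvelopingAlgebra A g) m)) := by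
  intro i
  set R := UniversalEnvelopingAlgebra A g with hR
  set Ω : R := mulι (A := A) (g := g) t with hΩdef
  have hc : ∀ u : R, u * Ω = Ω * u := central hperf t ht
  have hΩ' : ∀ v : m, Ω • v = v := hΩ
  have hΩA : ∀ v : A, Ω • v = 0 := by
    intro v
    have : Ω • v = augmentation A g Ω * v := rfl
    rw [this, aug_mulι t, zero_mul]
  set C := ModuleCat R with hC
  set MA : C := ModuleCat.of R A with hMA
  set Mm : C := ModuleCat.of R m with hMm
  set P : CategoryTheory.ProjectiveResolution MA := CategoryTheory.ProjectiveResolution.of MA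
    with hP
  -- the Casimir chain endomorphism of the resolution
  set φ : P.complex ⟶ P.complex := casimirChain Ω hc P.complex with hφ
  -- it lifts the zero map
  have hπ0 : φ ≫ P.π = 0 := by
    apply HomologicalComplex.hom_ext
    intro n
    rw [HomologicalComplex.comp_f, HomologicalComplex.zero_f]
    match n with
    | Nat.succ k =>
        exact (HomologicalComplex.isZero_single_obj_X (ComplexShape.down ℕ) 0 MA (k + 1)
          (by simp)).eq_of_tgt _ _
    | 0 =>
        apply ModuleCat.hom_ext; apply LinearMap.ext; intro v
        have : (φ.f 0 ≫ P.π.f 0).hom v = (P.π.f 0).hom (Ω • v) := rfl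
        rw [this, map_smul]
        exact hΩA _
  have h0 : Homotopy φ 0 := CategoryTheory.ProjectiveResolution.liftHomotopyZero φ hπ0
  -- apply the (right-opped) linear Yoneda functor
  set F := ((CategoryTheory.linearYoneda ℤ C).obj Mm).rightOp with hF
  set Fc := F.mapHomologicalComplex (ComplexShape.down ℕ) with hFc
  set L := Fc.obj P.complex with hL
  set Φ : L ⟶ L := Fc.map φ with hΦ
  have hΦid : Φ = 𝟙 L := by
    apply HomologicalComplex.hom_ext
    intro n
    rw [hΦ, HomologicalComplex.id_f]
    have : Φ.f n = F.map (φ.f n) := rfl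
    apply Quiver.Hom.unop_inj
    apply ModuleCat.hom_ext; apply LinearMap.ext
    intro (f : P.complex.X n ⟶ Mm)
    show φ.f n ≫ f = f
    apply ModuleCat.hom_ext; apply LinearMap.ext; intro v
    have : (φ.f n ≫ f).hom v = f.hom (Ω • v) := rfl
    rw [this, map_smul]
    exact hΩ' _
  have hΦ0 : HomologicalComplex.homologyMap Φ i = 0 := by
    have h1 : Homotopy Φ (Fc.map 0) := F.mapHomotopy h0
    have h2 := h1.homologyMap_eq i
    rw [Functor.map_zero, HomologicalComplex.homologyMap_zero] at h2
    exact h2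
  have hzL : CategoryTheory.Limits.IsZero (L.homology i) := by
    rw [CategoryTheory.Limits.IsZero.iff_id_eq_zero]
    rw [← HomologicalComplex.homologyMap_id, ← hΦid, hΦ0]
  have hzK : CategoryTheory.Limits.IsZero ((P.complex.linearYonedaObj ℤ Mm).homology i) := by
    exact CategoryTheory.Limits.IsZero.of_iso hzL.unop (HomologicalComplex.homologyUnop L i)
  have hzE : CategoryTheory.Limits.IsZero
      (((Ext ℤ C i).obj (Opposite.op MA)).obj Mm) :=
    CategoryTheory.Limits.IsZero.of_iso hzK (P.isoExt i Mm)
  have hid : 𝟙 (((Ext ℤ C i).obj (Opposite.op MA)).obj Mm) = 0 := hzE.eq_of_src _ _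
  constructor
  intro a b
  have ha : a = (𝟙 (((Ext ℤ C i).obj (Opposite.op MA)).obj Mm)) a := rfl
  have hb : b = (𝟙 (((Ext ℤ C i).obj (Opposite.op MA)).obj Mm)) b := rfl
  rw [ha, hb, hid]
  rfl
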